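/- For all positive integers p and k, 2 * ( C(2k,k) * C(2p-1,p) + ∑_{j=1}^{k} (-1)^j * C(2k, k-j) * C(2p, p-j) ) equals the super Catalan number S(p,k) = C(2p,p)*C(2k,k)/C(p+k,p). -/

import Mathlib

/-- Binomial coefficient `C(n,k)` for an integer lower index, equal to `0` when `k < 0`. -/
def intChoose (n : ℕ) (k : ℤ) : ℤ := if 0 ≤ k then n.choose k.toNat else 0

lemma intChoose_ofNat (n i : ℕ) : intChoose n (i : ℤ) = n.choose i := by
  simp [intChoose]

lemma intChoose_neg (n : ℕ) {t : ℤ} (h : t < 0) : intChoose n t = 0 := by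
  simp [intChoose, not_le.2 h]

lemma intChoose_big (n : ℕ) {t : ℤ} (h : (n : ℤ) < t) : intChoose n t = 0 := by
  have h0 : (0:ℤ) ≤ t := by omega
  have h1 : n < t.toNat := by omega
  simp [intChoose, h0, Nat.choose_eq_zero_of_lt h1]

lemma intChoose_succ (n : ℕ) (t : ℤ) :
    intChoose (n+1) t = intChoose n (t-1) + intChoose n t := by
  rcases lt_trichotomy t 0 with h | h | h
  · rw [intChoose_neg _ h, intChoose_neg _ (by omega), intChoose_neg _ h]; ring
  · subst h
    norm_num [intChoose]
  · obtain ⟨s, rfl⟩ : ∃ s : ℕ, t = (s : ℤ) + 1 := ⟨(t-1).toNat, by omega⟩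
    rw [show ((s:ℤ)+1-1) = (s:ℤ) by ring,
      show ((s:ℤ)+1) = ((s+1:ℕ):ℤ) by push_cast; ring,
      intChoose_ofNat, intChoose_ofNat, intChoose_ofNat, Nat.choose_succ_succ]
    push_cast
    ring

lemma intChoose_succ_succ (n : ℕ) (t : ℤ) :
    intChoose (n+2) t = intChoose n (t-2) + 2*intChoose n (t-1) + intChoose n t := by
  rw [show n+2 = (n+1)+1 from rfl, intChoose_succ, intChoose_succ, intChoose_succ,
    show t-1-1 = t-2 by ring]
  ring

lemma intChoose_symm {N : ℕ} {a b : ℤ} (h : a + b = 2*N) :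
    intChoose (2*N) a = intChoose (2*N) b := by
  rcases lt_or_ge a 0 with ha | ha
  · rw [intChoose_neg _ ha, intChoose_big _ (by omega)]
  rcases lt_or_ge b 0 with hb | hb
  · rw [intChoose_big _ (by omega), intChoose_neg _ hb]
  obtain ⟨x, rfl⟩ : ∃ x : ℕ, a = (x:ℤ) := ⟨a.toNat, by omega⟩
  obtain ⟨y, rfl⟩ : ∃ y : ℕ, b = (y:ℤ) := ⟨b.toNat, by omega⟩
  rw [intChoose_ofNat, intChoose_ofNat]
  have hxy : x + y = 2*N := by exact_mod_cast h
  rw [show y = 2*N - x by omega, Nat.choose_symm (by omega)]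

def cc (m n : ℕ) (i : ℕ) : ℚ :=
  (-1:ℚ)^(n+i) * intChoose (2*n) i * intChoose (2*m) ((m:ℤ) - n + i)

def F (m n : ℕ) : ℚ := ∑ i ∈ Finset.range (2*n+1), cc m n i

lemma sum_cc (m n N : ℕ) (h : 2*n+1 ≤ N) : ∑ i ∈ Finset.range N, cc m n i = F m n := by
  symm
  apply Finset.sum_subset (Finset.range_subset_range.2 h)
  intro i _ hi
  have h2 : (2*n : ℤ) < (i:ℤ) := by
    simp only [Finset.mem_range, not_lt] at hi
    exact_mod_cast by omega
  simp [cc, intChoose_big _ h2]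

lemma F_rec (m n : ℕ) : F m (n+1) = 4 * F m n - F (m+1) n := by
  have key : ∀ i : ℕ, cc m (n+1) i =
      ((-1:ℚ)^(n+1+i) * intChoose (2*n) ((i:ℤ)-2) * intChoose (2*m) ((m:ℤ)-n-1+i))
    + 2 * ((-1:ℚ)^(n+1+i) * intChoose (2*n) ((i:ℤ)-1) * intChoose (2*m) ((m:ℤ)-n-1+i))
    + ((-1:ℚ)^(n+1+i) * intChoose (2*n) (i:ℤ) * intChoose (2*m) ((m:ℤ)-n-1+i)) := by
    intro i
    unfold cc
    rw [show 2*(n+1) = 2*n+2 from by ring, intChoose_succ_succ]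
    push_cast
    ring
  have hF1 : F m (n+1) = ∑ i ∈ Finset.range (2*n+3), cc m (n+1) i := by
    rw [F, show 2*(n+1)+1 = 2*n+3 from by ring]
  rw [hF1, Finset.sum_congr rfl fun i _ => key i, Finset.sum_add_distrib,
    Finset.sum_add_distrib]
  -- B sum
  have hB : (∑ i ∈ Finset.range (2*n+3),
      2 * ((-1:ℚ)^(n+1+i) * intChoose (2*n) ((i:ℤ)-1) * intChoose (2*m) ((m:ℤ)-n-1+i)))
      = 2 * F m n := by
    rw [Finset.sum_range_succ']
    have h0 : 2 * ((-1:ℚ)^(n+1+0) * intChoose (2*n) (((0:ℕ):ℤ)-1) * intChoose (2*m) ((m:ℤ)-n-1+((0:ℕ):ℤ))) = 0 := by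
      rw [intChoose_neg _ (by norm_num)]
      push_cast; ring
    rw [h0, add_zero]
    rw [show (∑ i ∈ Finset.range (2*n+2),
        2 * ((-1:ℚ)^(n+1+(i+1)) * intChoose (2*n) (((i+1:ℕ):ℤ)-1) * intChoose (2*m) ((m:ℤ)-n-1+((i+1:ℕ):ℤ))))
      = ∑ i ∈ Finset.range (2*n+2), 2 * cc m n i from Finset.sum_congr rfl fun i _ => by
        unfold cc
        have hsgn : (-1:ℚ)^(n+1+(i+1)) = (-1:ℚ)^(n+i) := by
          rw [show n+1+(i+1) = (n+i)+2 from by ring, pow_add]; norm_num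
        rw [hsgn]
        push_cast
        ring_nf]
    rw [← Finset.mul_sum, sum_cc m n _ (by omega)]
  -- C sum
  have hC : (∑ i ∈ Finset.range (2*n+3),
      ((-1:ℚ)^(n+1+i) * intChoose (2*n) (i:ℤ) * intChoose (2*m) ((m:ℤ)-n-1+i)))
      = - ∑ i ∈ Finset.range (2*n+1),
      ((-1:ℚ)^(n+i) * intChoose (2*n) (i:ℤ) * intChoose (2*m) ((m:ℤ)-n-1+i)) := by
    rw [show (∑ i ∈ Finset.range (2*n+3),
        ((-1:ℚ)^(n+1+i) * intChoose (2*n) (i:ℤ) * intChoose (2*m) ((m:ℤ)-n-1+i)))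
      = ∑ i ∈ Finset.range (2*n+1),
        ((-1:ℚ)^(n+1+i) * intChoose (2*n) (i:ℤ) * intChoose (2*m) ((m:ℤ)-n-1+i)) from by
        symm
        apply Finset.sum_subset (Finset.range_subset_range.2 (by omega))
        intro i _ hi
        have h2 : (2*n : ℤ) < (i:ℤ) := by
          simp only [Finset.mem_range, not_lt] at hi
          exact_mod_cast by omega
        rw [intChoose_big _ h2]
        push_cast; ring]
    rw [← Finset.sum_neg_distrib]
    apply Finset.sum_congr rfl
    intro i _
    rw [show n+1+i = (n+i)+1 from by ring, pow_add]
    ring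
  -- A sum
  have hA : (∑ i ∈ Finset.range (2*n+3),
      ((-1:ℚ)^(n+1+i) * intChoose (2*n) ((i:ℤ)-2) * intChoose (2*m) ((m:ℤ)-n-1+i)))
      = - ∑ i ∈ Finset.range (2*n+1),
      ((-1:ℚ)^(n+i) * intChoose (2*n) (i:ℤ) * intChoose (2*m) ((m:ℤ)-n+1+i)) := by
    rw [Finset.sum_range_succ']
    have h0 : ((-1:ℚ)^(n+1+0) * intChoose (2*n) (((0:ℕ):ℤ)-2) * intChoose (2*m) ((m:ℤ)-n-1+((0:ℕ):ℤ))) = 0 := by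
      rw [intChoose_neg _ (by norm_num)]
      push_cast; ring
    rw [h0, add_zero, Finset.sum_range_succ']
    have h1 : ((-1:ℚ)^(n+1+(0+1)) * intChoose (2*n) (((0+1:ℕ):ℤ)-2) * intChoose (2*m) ((m:ℤ)-n-1+((0+1:ℕ):ℤ))) = 0 := by
      rw [intChoose_neg _ (by norm_num)]
      push_cast; ring
    rw [h1, add_zero, ← Finset.sum_neg_distrib]
    apply Finset.sum_congr rfl
    intro i _
    have hsgn : (-1:ℚ)^(n+1+(i+1+1)) = -(-1:ℚ)^(n+i) := by
      rw [show n+1+(i+1+1) = (n+i)+3 from by ring, pow_add]; norm_num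
    rw [hsgn]
    push_cast
    ring_nf
  rw [hB, hC, hA]
  -- combine
  have hF' : F (m+1) n = (∑ i ∈ Finset.range (2*n+1),
        ((-1:ℚ)^(n+i) * intChoose (2*n) (i:ℤ) * intChoose (2*m) ((m:ℤ)-n-1+i)))
      + 2 * F m n
      + (∑ i ∈ Finset.range (2*n+1),
        ((-1:ℚ)^(n+i) * intChoose (2*n) (i:ℤ) * intChoose (2*m) ((m:ℤ)-n+1+i))) := by
    simp only [F]
    rw [Finset.mul_sum, ← Finset.sum_add_distrib, ← Finset.sum_add_distrib]
    apply Finset.sum_congr rfl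
    intro i _
    unfold cc
    rw [show 2*(m+1) = 2*m+2 from by ring, intChoose_succ_succ]
    push_cast
    ring
  linarith [hF']

lemma F_eq (n m : ℕ) : F m n =
    ((2*m).choose m : ℚ) * ((2*n).choose n : ℚ) / ((m+n).choose m : ℚ) := by
  induction n generalizing m with
  | zero =>
    simp [F, cc, intChoose_ofNat, Finset.sum_range_succ]
  | succ n ih =>
    rw [F_rec, ih m, ih (m+1)]
    have h1 : ((m:ℚ)+1) * ((2*(m+1)).choose (m+1) : ℚ) = 2*(2*m+1) * ((2*m).choose m : ℚ) := by
      exact_mod_cast congrArg (Nat.cast : ℕ → ℚ) (Nat.succ_mul_centralBinom_succ m)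
    have h2 : ((n:ℚ)+1) * ((2*(n+1)).choose (n+1) : ℚ) = 2*(2*n+1) * ((2*n).choose n : ℚ) := by
      exact_mod_cast congrArg (Nat.cast : ℕ → ℚ) (Nat.succ_mul_centralBinom_succ n)
    have h3 : ((m:ℚ)+(n:ℚ)+1) * ((m+n).choose m : ℚ) = ((m+1+n).choose (m+1) : ℚ) * ((m:ℚ)+1) := by
      have := Nat.add_one_mul_choose_eq (m+n) m
      have h' : (m+n).succ * (m+n).choose m = (m+n+1).choose (m+1) * (m+1) := this
      rw [show m+1+n = m+n+1 from by ring]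
      exact_mod_cast congrArg (Nat.cast : ℕ → ℚ) h'
    have h4 : ((m:ℚ)+(n:ℚ)+1) * ((m+n).choose m : ℚ) = ((m+n+1).choose (n+1) : ℚ) * ((n:ℚ)+1) := by
      have h' : (m+n).succ * (m+n).choose n = (m+n+1).choose (n+1) * (n+1) :=
        Nat.add_one_mul_choose_eq (m+n) n
      rw [show (m+n).choose n = (m+n).choose m from by
        rw [← Nat.choose_symm (Nat.le_add_right m n)]; congr 1; omega] at h'
      exact_mod_cast congrArg (Nat.cast : ℕ → ℚ) h'
    have h5 : ((m+n+1).choose (n+1) : ℚ) = ((m+(n+1)).choose m : ℚ) := by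
      rw [show m+(n+1) = m+n+1 from by ring,
        show (m+n+1).choose (n+1) = (m+n+1).choose m from by
          rw [← Nat.choose_symm (by omega : m ≤ m+n+1)]; congr 1; omega]
    have p1 : ((m+n).choose m : ℚ) ≠ 0 := by
      exact_mod_cast (Nat.choose_pos (Nat.le_add_right m n)).ne'
    have p2 : ((m+1+n).choose (m+1) : ℚ) ≠ 0 := by
      exact_mod_cast (Nat.choose_pos (by omega : m+1 ≤ m+1+n)).ne'
    have p3 : ((m+(n+1)).choose m : ℚ) ≠ 0 := by
      exact_mod_cast (Nat.choose_pos (by omega : m ≤ m+(n+1))).ne'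
    rw [← h5] at p3 ⊢
    have hm1 : ((m:ℚ)+1) ≠ 0 := by positivity
    have hn1 : ((n:ℚ)+1) ≠ 0 := by positivity
    have e1 : ((2*(m+1)).choose (m+1) : ℚ) = 2*(2*m+1) * ((2*m).choose m : ℚ) / ((m:ℚ)+1) := by
      field_simp
      linarith [h1]
    have e2 : ((2*(n+1)).choose (n+1) : ℚ) = 2*(2*n+1) * ((2*n).choose n : ℚ) / ((n:ℚ)+1) := by
      field_simp
      linarith [h2]
    have e3 : ((m+1+n).choose (m+1) : ℚ) = ((m:ℚ)+(n:ℚ)+1) * ((m+n).choose m : ℚ) / ((m:ℚ)+1) := by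
      field_simp
      linarith [h3]
    have e4 : ((m+n+1).choose (n+1) : ℚ) = ((m:ℚ)+(n:ℚ)+1) * ((m+n).choose m : ℚ) / ((n:ℚ)+1) := by
      field_simp
      linarith [h4]
    rw [e1, e2, e3, e4]
    have hmn1 : ((m:ℚ)+(n:ℚ)+1) ≠ 0 := by positivity
    field_simp
    ring

lemma negpow (a b : ℕ) (h : (a + b) % 2 = 0) : (-1:ℚ)^a = (-1:ℚ)^b := by
  have h1 : (-1:ℚ)^(a+b) = 1 := by
    obtain ⟨c, hc⟩ : ∃ c, a+b = 2*c := ⟨(a+b)/2, by omega⟩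
    rw [hc, pow_mul]; norm_num
  have h2 : (-1:ℚ)^(b+b) = 1 := by
    obtain ⟨c, hc⟩ : ∃ c, b+b = 2*c := ⟨b, by omega⟩
    rw [hc, pow_mul]; norm_num
  calc (-1:ℚ)^a = (-1:ℚ)^a * (-1:ℚ)^(b+b) := by rw [h2, mul_one]
  _ = (-1:ℚ)^(a+b) * (-1:ℚ)^b := by rw [← pow_add, ← pow_add]; congr 1; omega
  _ = (-1:ℚ)^b := by rw [h1, one_mul]

lemma F_split (p k : ℕ) :
    F p k = ((2*k).choose k : ℚ) * ((2*p).choose p : ℚ)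
      + 2 * ∑ j ∈ Finset.Icc 1 k,
          (-1 : ℚ) ^ j * (intChoose (2 * k) ((k : ℤ) - j) : ℚ) *
            (intChoose (2 * p) ((p : ℤ) - j) : ℚ) := by
  have hIcc : ∑ j ∈ Finset.Icc 1 k,
          (-1 : ℚ) ^ j * (intChoose (2 * k) ((k : ℤ) - j) : ℚ) *
            (intChoose (2 * p) ((p : ℤ) - j) : ℚ)
      = ∑ j ∈ Finset.range k,
          (-1 : ℚ) ^ (1+j) * (intChoose (2 * k) ((k : ℤ) - (1+j)) : ℚ) *
            (intChoose (2 * p) ((p : ℤ) - (1+j)) : ℚ) := by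
    rw [← Finset.Ico_add_one_right_eq_Icc, Finset.sum_Ico_eq_sum_range]
    apply Finset.sum_congr (by rw [Nat.add_sub_cancel])
    intro j _
    push_cast
    ring_nf
  have hsplit : F p k = (∑ i ∈ Finset.range k, cc p k i) + cc p k k
      + ∑ j ∈ Finset.range k, cc p k (k+1+j) := by
    rw [F, ← Finset.sum_range_add_sum_Ico (fun i => cc p k i) (by omega : k+1 ≤ 2*k+1),
      Finset.sum_range_succ, Finset.sum_Ico_eq_sum_range,
      show 2*k+1 - (k+1) = k from by omega]
  rw [hsplit, hIcc]
  have hcenter : cc p k k = ((2*k).choose k : ℚ) * ((2*p).choose p : ℚ) := by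
    unfold cc
    rw [show (p:ℤ) - k + k = ((p:ℕ):ℤ) from by ring, intChoose_ofNat,
      intChoose_ofNat, negpow (k+k) 0 (by omega)]
    push_cast
    ring
  have hleft : (∑ i ∈ Finset.range k, cc p k i)
      = ∑ j ∈ Finset.range k,
          (-1 : ℚ) ^ (1+j) * (intChoose (2 * k) ((k : ℤ) - (1+j)) : ℚ) *
            (intChoose (2 * p) ((p : ℤ) - (1+j)) : ℚ) := by
    rw [← Finset.sum_range_reflect]
    apply Finset.sum_congr rfl
    intro j hj
    have hjk : j < k := Finset.mem_range.1 hj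
    unfold cc
    rw [negpow (k+(k-1-j)) (1+j) (by omega),
      show ((k-1-j : ℕ):ℤ) = (k:ℤ) - (1+j) from by omega,
      show (p:ℤ) - k + ((k:ℤ) - (1+j)) = (p:ℤ) - (1+j) from by ring]
  have hright : (∑ j ∈ Finset.range k, cc p k (k+1+j))
      = ∑ j ∈ Finset.range k,
          (-1 : ℚ) ^ (1+j) * (intChoose (2 * k) ((k : ℤ) - (1+j)) : ℚ) *
            (intChoose (2 * p) ((p : ℤ) - (1+j)) : ℚ) := by
    apply Finset.sum_congr rfl
    intro j hj
    have hjk : j < k := Finset.mem_range.1 hj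
    unfold cc
    rw [negpow (k+(k+1+j)) (1+j) (by omega),
      show ((k+1+j : ℕ):ℤ) = (k:ℤ) + (1+j) from by omega,
      intChoose_symm (show ((k:ℤ)+(1+j)) + ((k:ℤ)-(1+j)) = 2*(k:ℕ) from by push_cast; ring),
      show (p:ℤ) - k + ((k:ℤ) + (1+j)) = (p:ℤ) + (1+j) from by ring,
      intChoose_symm (show ((p:ℤ)+(1+j)) + ((p:ℤ)-(1+j)) = 2*(p:ℕ) from by push_cast; ring)]
  rw [hcenter, hleft, hright]
  ring

lemma double_choose (p : ℕ) (hp : 0 < p) :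
    (2*p).choose p = 2 * ((2*p-1).choose p) := by
  obtain ⟨q, rfl⟩ : ∃ q, p = q+1 := ⟨p-1, by omega⟩
  rw [show 2*(q+1) = (2*q+1)+1 from by ring, Nat.choose_succ_succ,
    show (2*q+1)+1-1 = 2*q+1 from by omega,
    show (2*q+1).choose q = (2*q+1).choose (q+1) from by
      rw [← Nat.choose_symm (by omega : q+1 ≤ 2*q+1)]; congr 1; omega]
  ring

/-- `2·(C(2k,k)C(2p-1,p) + ∑_{j=1}^k (-1)^j C(2k,k-j)C(2p,p-j)) = S(p,k)`. -/
theorem two_gamma_eq_superCatalan (p k : ℕ) (hp : 0 < p) (hk : 0 < k) :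
    2 * (((2 * k).choose k : ℚ) * ((2 * p - 1).choose p : ℚ) +
        ∑ j ∈ Finset.Icc 1 k,
          (-1 : ℚ) ^ j * (intChoose (2 * k) ((k : ℤ) - j) : ℚ) *
            (intChoose (2 * p) ((p : ℤ) - j) : ℚ)) =
      (((2 * p).choose p : ℚ) * ((2 * k).choose k : ℚ)) / ((p + k).choose p : ℚ) := by
  rw [← F_eq k p, F_split p k, double_choose p hp]
  push_cast
  ring
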